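/- The filtering optimization preserves the weighted language: restricting the rules of GLCT(G, P, C) by (i) keeping a slashed rule mentioning Y/α only when α is reachable from Y in the left-recursion graph restricted to P-rules, and (ii) keeping rules mentioning Y/α only when Y is in the retained set (Y = S, or Y occurs in a non-leftmost right-hand-side position of a P-rule, or Y occurs anywhere in the right-hand side of a rule in R\P), removes only useless rules, and hence the filtered grammar defines the same weighted language as GLCT(G, P, C). -/

import Mathlib

/-- Symbols of a grammar: nonterminals `N` or terminals `T`. -/
abbrev GSym (N T : Type) := N ⊕ T

/-- A weighted production rule `X →w α`. -/
abbrev GRule (N T W : Type) := N × List (GSym N T) × W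

/-- A weighted context-free grammar (rules form a bag/set of weighted rules). -/
structure WCFG (N T W : Type) where
  start : N
  rules : Set (GRule N T W)

/-- Derivation trees (with a possible `gap` leaf, used to represent a removed
left corner; well-formed derivations contain no gaps). -/
inductive DTree (N T W : Type) where
  | leaf : T → DTree N T W
  | gap  : DTree N T W
  | node : N → W → List (DTree N T W) → DTree N T W

namespace DTree

variable {N T W : Type}

def label : DTree N T W → Option (GSym N T)
  | leaf a => some (Sum.inr a)
  | gap => none
  | node X _ _ => some (Sum.inl X)

def yield : DTree N T W → List T
  | leaf a => [a]
  | gap => []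
  | node _ _ ts => (ts.attach.map fun t => t.1.yield).flatten
decreasing_by simp only [DTree.node.sizeOf_spec]; have := List.sizeOf_lt_of_mem t.2; omega

def weight [Semiring W] : DTree N T W → W
  | leaf _ => 1
  | gap => 1
  | node _ w ts => w * (ts.attach.map fun t => t.1.weight).prod
decreasing_by simp only [DTree.node.sizeOf_spec]; have := List.sizeOf_lt_of_mem t.2; omega

/-- The list of weights of the rules applied at internal nodes. -/
def ruleWeights : DTree N T W → List W
  | leaf _ => []
  | gap => []
  | node _ w ts => w :: (ts.attach.map fun t => t.1.ruleWeights).flatten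
decreasing_by simp only [DTree.node.sizeOf_spec]; have := List.sizeOf_lt_of_mem t.2; omega

/-- Left-recursion depth: length of the path from the root to the leftmost leaf. -/
def lrDepth : DTree N T W → ℕ
  | leaf _ => 0
  | gap => 0
  | node _ _ [] => 0
  | node _ _ (t1 :: _) => t1.lrDepth + 1

/-- `Sub s t` : `s` is a subtree of `t`. -/
inductive Sub : DTree N T W → DTree N T W → Prop
  | refl (t : DTree N T W) : Sub t t
  | child {s t : DTree N T W} {X w ts} : t ∈ ts → Sub s t → Sub s (node X w ts)

end DTree

variable {N T W : Type}

/-- The children list `ts` together with head `X` and weight `w` matches a rule in `R`. -/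
def RuleApp (R : Set (GRule N T W)) (X : N) (ts : List (DTree N T W)) (w : W) : Prop :=
  ∃ rhs, (X, rhs, w) ∈ R ∧ ts.map DTree.label = rhs.map some

/-- Well-formed derivations of a grammar. -/
inductive DTree.WF (G : WCFG N T W) : DTree N T W → Prop
  | leaf (a : T) : DTree.WF G (DTree.leaf a)
  | node {X : N} {w : W} {ts : List (DTree N T W)} :
      RuleApp G.rules X ts w → (∀ t ∈ ts, DTree.WF G t) →
      DTree.WF G (DTree.node X w ts)

/-- The weighted language of a symbol `α`: the sum of the weights of all
well-formed derivations rooted at `α` whose yield is `x`. -/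
noncomputable def WCFG.lang [Semiring W] (G : WCFG N T W) (α : GSym N T) (x : List T) : W :=
  ∑ᶠ t : {t : DTree N T W // t.WF G ∧ t.label = some α ∧ t.yield = x}, (t : DTree N T W).weight

/-- `α` occurs as the label of some subderivation of some derivation rooted at the start symbol. -/
def WCFG.Useful (G : WCFG N T W) (α : GSym N T) : Prop :=
  ∃ t s : DTree N T W, t.WF G ∧ t.label = some (Sum.inl G.start) ∧ s.Sub t ∧ s.label = some α

/-- Trimming: keep only the rules all of whose symbols are useful. -/
def WCFG.trim (G : WCFG N T W) : WCFG N T W where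
  start := G.start
  rules := {r | r ∈ G.rules ∧ ∀ s ∈ (Sum.inl r.1 :: r.2.1), G.Useful s}

/-- A rule participates in some derivation rooted at the start symbol. -/
def WCFG.RuleUseful (G : WCFG N T W) (r : GRule N T W) : Prop :=
  ∃ t s : DTree N T W, t.WF G ∧ t.label = some (Sum.inl G.start) ∧ s.Sub t ∧
    ∃ ts, s = DTree.node r.1 r.2.2 ts ∧ ts.map DTree.label = r.2.1.map some

/-- Union of weighted languages. -/
def wunion [Semiring W] (L L' : List T → W) : List T → W := fun x => L x + L' x

/-- Concatenation of weighted languages: sum over the two-part factorizations. -/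
def wconc [Semiring W] (L L' : List T → W) : List T → W := fun x =>
  ((List.range (x.length + 1)).map (fun i => L (x.take i) * L' (x.drop i))).sum

/-- The zero weighted language. -/
def wzero [Semiring W] : List T → W := fun _ => 0

open Classical in
/-- The unit weighted language: `1` on the empty string, `0` elsewhere. -/
noncomputable def wone [Semiring W] : List T → W := fun x => if x = [] then 1 else 0

/-- Nonterminals of the output of the (generalized) left-corner / speculation
transformations: originals `X`, frozen `X̃`, and slashed `α/β`. -/
inductive LCNT (N T : Type) where
  | orig : N → LCNT N T
  | frozen : N → LCNT N T
  | slash : GSym N T → GSym N T → LCNT N T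

/-- Embedding of original symbols into the transformed grammar's symbols. -/
def emb : GSym N T → GSym (LCNT N T) T := Sum.map LCNT.orig id

/-- The frozen version `α̃` of a symbol (terminals are left unchanged). -/
def frz : GSym N T → GSym (LCNT N T) T
  | Sum.inl X => Sum.inl (LCNT.frozen X)
  | Sum.inr a => Sum.inr a

/-- The generalized left-corner transformation GLCT(G, P, C). -/
def GLCT (G : WCFG N T W) [One W] (P : Set (GRule N T W)) (C : Set (GSym N T)) :
    WCFG (LCNT N T) T W where
  start := LCNT.orig G.start
  rules :=
    {r | ∃ X : N, (Sum.inl X : GSym N T) ∉ C ∧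
          r = (LCNT.orig X, [Sum.inl (LCNT.frozen X)], (1 : W))} ∪
    {r | ∃ (X : N) (α : GSym N T), α ∈ C ∧
          r = (LCNT.orig X, [frz α, Sum.inl (LCNT.slash (Sum.inl X) α)], (1 : W))} ∪
    {r | ∃ α : GSym N T, r = (LCNT.slash α α, [], (1 : W))} ∪
    {r | ∃ (X : N) (α : GSym N T) (β : List (GSym N T)) (w : W) (Y : N),
          (X, α :: β, w) ∈ P ∧
          r = (LCNT.slash (Sum.inl Y) α,
               β.map emb ++ [Sum.inl (LCNT.slash (Sum.inl Y) (Sum.inl X))], w)} ∪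
    {r | ∃ (X : N) (rhs : List (GSym N T)) (w : W),
          (X, rhs, w) ∈ G.rules ∧ (X, rhs, w) ∉ P ∧ r = (LCNT.frozen X, rhs.map emb, w)} ∪
    {r | ∃ (X : N) (α : GSym N T) (β : List (GSym N T)) (w : W),
          (X, α :: β, w) ∈ P ∧ α ∉ C ∧ r = (LCNT.frozen X, frz α :: β.map emb, w)}

/-- The speculation transformation SPEC(G, P, C). -/
def SPEC (G : WCFG N T W) [One W] (P : Set (GRule N T W)) (C : Set (GSym N T)) :
    WCFG (LCNT N T) T W where
  start := LCNT.orig G.start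
  rules :=
    {r | ∃ X : N, (Sum.inl X : GSym N T) ∉ C ∧
          r = (LCNT.orig X, [Sum.inl (LCNT.frozen X)], (1 : W))} ∪
    {r | ∃ (X : N) (α : GSym N T), α ∈ C ∧
          r = (LCNT.orig X, [frz α, Sum.inl (LCNT.slash (Sum.inl X) α)], (1 : W))} ∪
    {r | ∃ α : GSym N T, r = (LCNT.slash α α, [], (1 : W))} ∪
    {r | ∃ (X : N) (α : GSym N T) (β : List (GSym N T)) (w : W) (Y : GSym N T),
          (X, α :: β, w) ∈ P ∧
          r = (LCNT.slash (Sum.inl X) Y,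
               Sum.inl (LCNT.slash α Y) :: β.map emb, w)} ∪
    {r | ∃ (X : N) (rhs : List (GSym N T)) (w : W),
          (X, rhs, w) ∈ G.rules ∧ (X, rhs, w) ∉ P ∧ r = (LCNT.frozen X, rhs.map emb, w)} ∪
    {r | ∃ (X : N) (α : GSym N T) (β : List (GSym N T)) (w : W),
          (X, α :: β, w) ∈ P ∧ α ∉ C ∧ r = (LCNT.frozen X, frz α :: β.map emb, w)}

/-- Edge relation of the left-recursion graph restricted to a rule set `R`:
an edge from `X` to the leftmost right-hand-side symbol of a rule in `R`. -/
def EdgeRel (R : Set (GRule N T W)) (a b : GSym N T) : Prop :=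
  ∃ (X : N) (rhs : List (GSym N T)) (w : W),
    a = Sum.inl X ∧ (X, rhs, w) ∈ R ∧ rhs.head? = some b

/-- A rule is left-recursive if its edge lies on a cycle of the left-recursion graph. -/
def LeftRecRule (G : WCFG N T W) (r : GRule N T W) : Prop :=
  ∃ b, r.2.1.head? = some b ∧ Relation.ReflTransGen (EdgeRel G.rules) b (Sum.inl r.1)

/-- `bottoms(P)`: the symbols that may appear at the bottom of a spine. -/
def bottoms (G : WCFG N T W) (P : Set (GRule N T W)) : Set (GSym N T) :=
  {α | ((∃ a : T, α = Sum.inr a) ∨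
        ∃ (X : N) (rhs : List (GSym N T)) (w : W),
          α = Sum.inl X ∧ (X, rhs, w) ∈ G.rules ∧ (X, rhs, w) ∉ P ∧ rhs ≠ []) ∧
       (∃ (X : N) (rhs : List (GSym N T)) (w : W), (X, rhs, w) ∈ P ∧ rhs.head? = some α)}


/-- The rule mentions the slashed nonterminal `y/a` (on either side). -/
def MentionsSlash (r : GRule (LCNT N T) T W) (y a : GSym N T) : Prop :=
  r.1 = LCNT.slash y a ∨ Sum.inl (LCNT.slash y a) ∈ r.2.1

/-- The retained set: the start symbol, symbols in non-leftmost positions of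
P-rules, and symbols anywhere on the right-hand side of rules in R \\ P. -/
def RetainedSet (G : WCFG N T W) (P : Set (GRule N T W)) : Set (GSym N T) :=
  {s | s = Sum.inl G.start ∨
       (∃ (X : N) (rhs : List (GSym N T)) (w : W), (X, rhs, w) ∈ P ∧ s ∈ rhs.tail) ∨
       (∃ (X : N) (rhs : List (GSym N T)) (w : W),
          (X, rhs, w) ∈ G.rules ∧ (X, rhs, w) ∉ P ∧ s ∈ rhs)}

/-- GLCT with the filtering optimization: keep a rule mentioning `y/a` only when
`a` is reachable from `y` in the P-restricted left-recursion graph and `y` is retained. -/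
def FilteredGLCT [One W] (G : WCFG N T W) (P : Set (GRule N T W)) (C : Set (GSym N T)) :
    WCFG (LCNT N T) T W where
  start := LCNT.orig G.start
  rules := {r | r ∈ (GLCT G P C).rules ∧
    ∀ y a : GSym N T, MentionsSlash r y a →
      Relation.ReflTransGen (EdgeRel P) y a ∧ y ∈ RetainedSet G P}

section FilterAux

variable {N T W : Type}

/-- Well-formedness is monotone in the rule set. -/
lemma wf_mono {M : Type} {G₁ G₂ : WCFG M T W} (hs : G₁.start = G₂.start)
    (h : G₁.rules ⊆ G₂.rules) : ∀ {t : DTree M T W}, t.WF G₁ → t.WF G₂ := by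
  intro t hwf
  induction hwf with
  | leaf a => exact .leaf a
  | node hra _ ih =>
    obtain ⟨rhs, hm, hl⟩ := hra
    exact .node ⟨rhs, h hm, hl⟩ fun t ht => ih t ht

/-- Subtrees of well-formed trees are well-formed. -/
lemma sub_wf {M : Type} {G : WCFG M T W} : ∀ {s t : DTree M T W},
    s.Sub t → t.WF G → s.WF G := by
  intro s t h
  induction h with
  | refl => exact id
  | child ht _ ih =>
    intro hwf
    cases hwf with
    | node hra hts => exact ih (hts _ ht)

lemma mem_of_label_eq {M : Type} {ts : List (DTree M T W)} {rhs : List (GSym M T)}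
    (h : ts.map DTree.label = rhs.map some) {sym : GSym M T} (hm : sym ∈ rhs) :
    ∃ t ∈ ts, t.label = some sym := by
  have : some sym ∈ ts.map DTree.label := by
    rw [h]; exact List.mem_map_of_mem hm
  simpa [List.mem_map] using this

lemma label_of_mem {M : Type} {ts : List (DTree M T W)} {rhs : List (GSym M T)}
    (h : ts.map DTree.label = rhs.map some) {t : DTree M T W} (ht : t ∈ ts) :
    ∃ sym ∈ rhs, t.label = some sym := by
  have : t.label ∈ rhs.map some := by
    rw [← h]; exact List.mem_map_of_mem ht
  obtain ⟨sym, hs, he⟩ := List.mem_map.1 this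
  exact ⟨sym, hs, he.symm⟩

/-- In a well-formed GLCT derivation, a node labelled `y/a` witnesses
reachability `y ⇝ a` in the `P`-restricted left-recursion graph. -/
lemma slash_reach [One W] {G : WCFG N T W} {P : Set (GRule N T W)} {C : Set (GSym N T)} :
    ∀ {t : DTree (LCNT N T) T W}, t.WF (GLCT G P C) →
      ∀ {y a : GSym N T}, t.label = some (Sum.inl (LCNT.slash y a)) →
        Relation.ReflTransGen (EdgeRel P) y a := by
  intro t hwf
  induction hwf with
  | leaf b => intro y a h; simp [DTree.label] at h
  | @node X w ts hra hts ih =>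
    intro y a hl
    simp only [DTree.label, Option.some.injEq, Sum.inl.injEq] at hl
    subst hl
    obtain ⟨rhs, hmem, hlab⟩ := hra
    rcases hmem with (((((h | h) | h) | h) | h) | h)
    · obtain ⟨X', _, heq⟩ := h; simp at heq
    · obtain ⟨X', α, _, heq⟩ := h; simp at heq
    · obtain ⟨α, heq⟩ := h
      simp only [Prod.mk.injEq, LCNT.slash.injEq] at heq
      obtain ⟨⟨h1, h2⟩, -, -⟩ := heq
      subst h1; subst h2
      exact Relation.ReflTransGen.refl
    · obtain ⟨X', α, β, w', Y, hp, heq⟩ := h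
      simp only [Prod.mk.injEq, LCNT.slash.injEq] at heq
      obtain ⟨⟨h1, h2⟩, h3, -⟩ := heq
      subst h3
      have hmem' : (Sum.inl (LCNT.slash (Sum.inl Y) (Sum.inl X')) : GSym (LCNT N T) T) ∈
          List.map emb β ++ [Sum.inl (LCNT.slash (Sum.inl Y) (Sum.inl X'))] :=
        List.mem_append_right _ (List.mem_singleton.2 rfl)
      obtain ⟨t', ht', hlt⟩ := mem_of_label_eq hlab hmem'
      have hy : Relation.ReflTransGen (EdgeRel P) (Sum.inl Y) (Sum.inl X') := ih t' ht' hlt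
      rw [h1, h2]
      exact hy.tail ⟨X', α :: β, w', rfl, hp, rfl⟩
    · obtain ⟨X', _, _, _, heq⟩ := h; simp at heq
    · obtain ⟨X', _, _, _, _, heq⟩ := h; simp at heq

/-- The invariant carried by labels in a derivation from the start symbol:
original and slashed nonterminals are retained. -/
def RInv (G : WCFG N T W) (P : Set (GRule N T W)) :
    Option (GSym (LCNT N T) T) → Prop
  | some (Sum.inl (LCNT.orig Y)) => Sum.inl Y ∈ RetainedSet G P
  | some (Sum.inl (LCNT.slash y _)) => y ∈ RetainedSet G P
  | _ => True

lemma rinv_frz {G : WCFG N T W} {P : Set (GRule N T W)} (α : GSym N T) :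
    RInv G P (some (frz α)) := by
  cases α <;> trivial

lemma rinv_emb {G : WCFG N T W} {P : Set (GRule N T W)} {b : GSym N T}
    (h : ∀ Z, b = Sum.inl Z → Sum.inl Z ∈ RetainedSet G P) :
    RInv G P (some (emb b)) := by
  cases b with
  | inl Z => exact h Z rfl
  | inr a => trivial

/-- The invariant propagates from the head of a rule to its right-hand side. -/
lemma inv_step [One W] {G : WCFG N T W} {P : Set (GRule N T W)} {C : Set (GSym N T)}
    {X : LCNT N T} {rhs : List (GSym (LCNT N T) T)} {w : W}
    (hmem : (X, rhs, w) ∈ (GLCT G P C).rules)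
    (hX : RInv G P (some (Sum.inl X))) :
    ∀ sym ∈ rhs, RInv G P (some sym) := by
  rcases hmem with (((((h | h) | h) | h) | h) | h)
  · obtain ⟨X', -, heq⟩ := h
    simp only [Prod.mk.injEq] at heq
    obtain ⟨h1, h2, -⟩ := heq
    subst h2
    intro sym hs
    simp only [List.mem_singleton] at hs
    subst hs; trivial
  · obtain ⟨X', α, -, heq⟩ := h
    simp only [Prod.mk.injEq] at heq
    obtain ⟨h1, h2, -⟩ := heq
    subst h1; subst h2
    intro sym hs
    simp only [List.mem_cons, List.not_mem_nil, or_false] at hs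
    rcases hs with rfl | rfl
    · exact rinv_frz α
    · exact hX
  · obtain ⟨α, heq⟩ := h
    simp only [Prod.mk.injEq] at heq
    obtain ⟨-, h2, -⟩ := heq
    subst h2
    intro sym hs; simp at hs
  · obtain ⟨X', α, β, w', Y, hp, heq⟩ := h
    simp only [Prod.mk.injEq] at heq
    obtain ⟨h1, h2, -⟩ := heq
    subst h1; subst h2
    intro sym hs
    rcases List.mem_append.1 hs with hs | hs
    · obtain ⟨b, hb, he⟩ := List.mem_map.1 hs
      subst he
      exact rinv_emb fun Z hZ =>
        Or.inr (Or.inl ⟨X', α :: β, w', hp, by simpa [hZ] using hb⟩)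
    · simp only [List.mem_singleton] at hs
      subst hs
      exact hX
  · obtain ⟨X', rhs₀, w', hg, hnp, heq⟩ := h
    simp only [Prod.mk.injEq] at heq
    obtain ⟨h1, h2, -⟩ := heq
    subst h2
    intro sym hs
    obtain ⟨b, hb, he⟩ := List.mem_map.1 hs
    subst he
    exact rinv_emb fun Z hZ =>
      Or.inr (Or.inr ⟨X', rhs₀, w', hg, hnp, by simpa [hZ] using hb⟩)
  · obtain ⟨X', α, β, w', hp, hc, heq⟩ := h
    simp only [Prod.mk.injEq] at heq
    obtain ⟨h1, h2, -⟩ := heq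
    subst h2
    intro sym hs
    simp only [List.mem_cons] at hs
    rcases hs with rfl | hs
    · exact rinv_frz α
    · obtain ⟨b, hb, he⟩ := List.mem_map.1 hs
      subst he
      exact rinv_emb fun Z hZ =>
        Or.inr (Or.inl ⟨X', α :: β, w', hp, by simpa [hZ] using hb⟩)

/-- The invariant holds at every subtree. -/
lemma sub_inv [One W] {G : WCFG N T W} {P : Set (GRule N T W)} {C : Set (GSym N T)} :
    ∀ {s t : DTree (LCNT N T) T W}, s.Sub t → t.WF (GLCT G P C) →
      RInv G P t.label → RInv G P s.label := by
  intro s t h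
  induction h with
  | refl => exact fun _ h => h
  | child ht _ ih =>
    intro hwf hinv
    cases hwf with
    | node hra hts =>
      obtain ⟨rhs, hmem, hlab⟩ := hra
      obtain ⟨sym, hsym, he⟩ := label_of_mem hlab ht
      exact ih (hts _ ht) (he ▸ inv_step hmem hinv sym hsym)

/-- The filter condition holds at every well-formed node satisfying the invariant. -/
lemma filter_holds [One W] {G : WCFG N T W} {P : Set (GRule N T W)} {C : Set (GSym N T)}
    {X : LCNT N T} {w : W} {ts : List (DTree (LCNT N T) T W)} {rhs : List (GSym (LCNT N T) T)}
    (hmem : (X, rhs, w) ∈ (GLCT G P C).rules)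
    (hlab : ts.map DTree.label = rhs.map some)
    (hwf : (DTree.node X w ts).WF (GLCT G P C))
    (hinv : RInv G P (some (Sum.inl X))) :
    ∀ y a : GSym N T, MentionsSlash (X, rhs, w) y a →
      Relation.ReflTransGen (EdgeRel P) y a ∧ y ∈ RetainedSet G P := by
  intro y a hm
  rcases hm with hm | hm
  · have hX : X = LCNT.slash y a := hm
    subst hX
    exact ⟨slash_reach hwf rfl, hinv⟩
  · have hm' : (Sum.inl (LCNT.slash y a) : GSym (LCNT N T) T) ∈ rhs := hm
    obtain ⟨t', ht', hlt⟩ := mem_of_label_eq hlab hm'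
    have hwf' : t'.WF (GLCT G P C) := by
      cases hwf with
      | node _ hts => exact hts _ ht'
    exact ⟨slash_reach hwf' hlt, inv_step hmem hinv _ hm'⟩

/-- Well-formed GLCT derivations satisfying the invariant are well-formed in
the filtered grammar. -/
lemma wf_filtered [One W] {G : WCFG N T W} {P : Set (GRule N T W)} {C : Set (GSym N T)} :
    ∀ {t : DTree (LCNT N T) T W}, t.WF (GLCT G P C) → RInv G P t.label →
      t.WF (FilteredGLCT G P C) := by
  intro t hwf
  induction hwf with
  | leaf a => exact fun _ => .leaf a
  | @node X w ts hra hts ih =>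
    intro hinv
    obtain ⟨rhs, hmem, hlab⟩ := hra
    refine .node ⟨rhs, ⟨hmem, ?_⟩, hlab⟩ ?_
    · exact filter_holds hmem hlab (.node ⟨rhs, hmem, hlab⟩ hts) hinv
    · intro t ht
      obtain ⟨sym, hsym, he⟩ := label_of_mem hlab ht
      exact ih t ht (he ▸ inv_step hmem hinv sym hsym)

end FilterAux

/-- The filtering optimization removes only useless rules and preserves the
weighted language. -/
theorem filtered_GLCT_preserves_language [CommSemiring W]
    (G : WCFG N T W) (P : Set (GRule N T W)) (C : Set (GSym N T))
    (hP : P ⊆ G.rules) (hPnn : ∀ r ∈ P, r.2.1 ≠ []) :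
    (∀ r ∈ (GLCT G P C).rules, r ∉ (FilteredGLCT G P C).rules →
        ¬ (GLCT G P C).RuleUseful r) ∧
    (∀ x : List T, (FilteredGLCT G P C).lang (Sum.inl (LCNT.orig G.start)) x =
        (GLCT G P C).lang (Sum.inl (LCNT.orig G.start)) x) := by
  have hstart : (Sum.inl G.start : GSym N T) ∈ RetainedSet G P := Or.inl rfl
  constructor
  · rintro r hr hnr ⟨t, s, hwf, hlab, hsub, ts, hs, hts⟩
    have hsw : s.WF (GLCT G P C) := sub_wf hsub hwf
    have hsinv : RInv G P s.label := by
      refine sub_inv hsub hwf ?_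
      rw [hlab]; exact hstart
    subst hs
    have cond := filter_holds (X := r.1) (rhs := r.2.1) (w := r.2.2)
      hr hts hsw hsinv
    exact hnr ⟨hr, cond⟩
  · intro x
    have hpred :
        (fun t : DTree (LCNT N T) T W =>
          t.WF (FilteredGLCT G P C) ∧
            t.label = some (Sum.inl (LCNT.orig G.start)) ∧ t.yield = x) =
        (fun t : DTree (LCNT N T) T W =>
          t.WF (GLCT G P C) ∧
            t.label = some (Sum.inl (LCNT.orig G.start)) ∧ t.yield = x) := by
      funext t
      apply propext
      constructor
      · rintro ⟨h1, h2, h3⟩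
        refine ⟨wf_mono (G₁ := FilteredGLCT G P C) (G₂ := GLCT G P C) rfl ?_ h1, h2, h3⟩
        intro r hr
        have hr2 : r ∈ (GLCT G P C).rules ∧
            ∀ y a : GSym N T, MentionsSlash r y a →
              Relation.ReflTransGen (EdgeRel P) y a ∧ y ∈ RetainedSet G P := hr
        exact hr2.1
      · rintro ⟨h1, h2, h3⟩
        refine ⟨wf_filtered h1 ?_, h2, h3⟩
        rw [h2]; exact hstart
    unfold WCFG.lang
    rw [finsum_subtype_eq_finsum_cond, finsum_subtype_eq_finsum_cond]
    refine finsum_congr fun t => ?_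
    rw [show (t.WF (FilteredGLCT G P C) ∧
        t.label = some (Sum.inl (LCNT.orig G.start)) ∧ t.yield = x) =
        (t.WF (GLCT G P C) ∧
        t.label = some (Sum.inl (LCNT.orig G.start)) ∧ t.yield = x) from
      congrFun hpred t]
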